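/- If G is the incomparability graph of a natural unit interval order, then X_G(x,t) is a polynomial in t whose coefficients are symmetric functions: for every j, the coefficient of t^j in X_G(x,t) is invariant under permutations of the variables x_1, x_2, …. -/

import Mathlib

/-- A graph on a finite set of positive integers, with edges stored as ordered
pairs `(i, j)` with `i < j`. -/
structure FinGraph where
  V : Finset ℕ
  E : Finset (ℕ × ℕ)
  mem_fst : ∀ e ∈ E, e.1 ∈ V
  mem_snd : ∀ e ∈ E, e.2 ∈ V
  fst_lt_snd : ∀ e ∈ E, e.1 < e.2
  pos : ∀ v ∈ V, 0 < v

/-- A proper coloring of `G` by positive integers (set to `0` off the vertex set). -/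
def IsProperColoring (G : FinGraph) (κ : ℕ → ℕ) : Prop :=
  (∀ v ∈ G.V, 0 < κ v) ∧ (∀ v, v ∉ G.V → κ v = 0) ∧ ∀ e ∈ G.E, κ e.1 ≠ κ e.2

/-- `asc κ`: the number of edges `{i,j}` with `i < j` and `κ i < κ j`. -/
def ascNum (G : FinGraph) (κ : ℕ → ℕ) : ℕ :=
  (G.E.filter fun e => κ e.1 < κ e.2).card

/-- The monomial `x_κ = ∏_{v ∈ V} x_{κ v}`, recorded as an exponent vector. -/
noncomputable def xmonom (G : FinGraph) (κ : ℕ → ℕ) : ℕ →₀ ℕ :=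
  ∑ v ∈ G.V, Finsupp.single (κ v) 1

/-- The chromatic quasisymmetric function `X_G(x,t)`, as a formal power series in
the variables `x_1, x_2, …` whose coefficients are polynomials in `t`. -/
noncomputable def XG (G : FinGraph) : MvPowerSeries ℕ (Polynomial ℚ) :=
  fun d => ∑ᶠ κ ∈ {κ : ℕ → ℕ | IsProperColoring G κ ∧ xmonom G κ = d},
    (Polynomial.X : Polynomial ℚ) ^ ascNum G κ

/-- `[k]_t = 1 + t + ⋯ + t^(k-1)`. -/
noncomputable def tnum (R : Type*) [CommSemiring R] (k : ℕ) : Polynomial R :=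
  ∑ j ∈ Finset.range k, Polynomial.X ^ j



open scoped Classical


noncomputable def reflIn (C : Finset ℕ) (v : ℕ) : ℕ :=
  if h : v ∈ C then ((C.orderIsoOfFin rfl) (((C.orderIsoOfFin rfl).symm ⟨v, h⟩).rev) : ℕ) else v

lemma reflIn_mem {C : Finset ℕ} {v : ℕ} (h : v ∈ C) : reflIn C v ∈ C := by
  rw [reflIn, dif_pos h]; exact ((C.orderIsoOfFin rfl) _).2

lemma reflIn_coe (C : Finset ℕ) (k : Fin C.card) :
    reflIn C ((C.orderIsoOfFin rfl) k : ℕ) = ((C.orderIsoOfFin rfl) k.rev : ℕ) := by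
  rw [reflIn, dif_pos ((C.orderIsoOfFin rfl) k).2]
  have h0 : (⟨(((C.orderIsoOfFin rfl) k : {x // x ∈ C}) : ℕ), ((C.orderIsoOfFin rfl) k).2⟩ : {x // x ∈ C}) = (C.orderIsoOfFin rfl) k := rfl
  rw [h0, OrderIso.symm_apply_apply]

lemma reflIn_invol {C : Finset ℕ} {v : ℕ} (h : v ∈ C) : reflIn C (reflIn C v) = v := by
  set σ := C.orderIsoOfFin rfl with hσ
  have h1 : v = (σ (σ.symm ⟨v, h⟩) : ℕ) := by simp
  rw [h1, reflIn_coe, reflIn_coe, Fin.rev_rev]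

lemma reflIn_lt {C : Finset ℕ} {v w : ℕ} (hv : v ∈ C) (hw : w ∈ C) (h : v < w) :
    reflIn C w < reflIn C v := by
  set σ := C.orderIsoOfFin rfl with hσ
  have h1 : v = (σ (σ.symm ⟨v, hv⟩) : ℕ) := by simp
  have h2 : w = (σ (σ.symm ⟨w, hw⟩) : ℕ) := by simp
  rw [h1, h2, reflIn_coe, reflIn_coe]
  have : σ.symm ⟨v, hv⟩ < σ.symm ⟨w, hw⟩ := by
    rw [← σ.lt_iff_lt]; simpa using h
  have hrev : (σ.symm ⟨w, hw⟩).rev < (σ.symm ⟨v, hv⟩).rev := by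
    simpa [Fin.rev_lt_rev] using this
  exact_mod_cast (σ.lt_iff_lt).2 hrev

lemma reflIn_between {C : Finset ℕ} {v w : ℕ} (hv : v ∈ C) (hw : w ∈ C) (hvw : v < w)
    (hb : ∀ x ∈ C, ¬(v < x ∧ x < w)) :
    ∀ x ∈ C, ¬(reflIn C w < x ∧ x < reflIn C v) := by
  set σ := C.orderIsoOfFin rfl with hσ
  set j := σ.symm ⟨v, hv⟩ with hj
  set k := σ.symm ⟨w, hw⟩ with hk
  have h1 : v = (σ j : ℕ) := by simp [hj]
  have h2 : w = (σ k : ℕ) := by simp [hk]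
  have hjk : j < k := by rw [← σ.lt_iff_lt]; exact_mod_cast (h1 ▸ h2 ▸ hvw)
  have hcons : (k : ℕ) = (j : ℕ) + 1 := by
    by_contra hne
    have hlt : (j : ℕ) + 1 < (k : ℕ) := by omega
    set m : Fin C.card := ⟨(j : ℕ) + 1, lt_trans hlt k.isLt⟩ with hm
    have hjm : j < m := by simp [hm, Fin.lt_def]
    have hmk : m < k := by simp [hm, Fin.lt_def]; omega
    exact hb (σ m) ((σ m).2) ⟨by rw [h1]; exact_mod_cast σ.lt_iff_lt.2 hjm,
      by rw [h2]; exact_mod_cast σ.lt_iff_lt.2 hmk⟩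
  intro x hx ⟨hl, hr⟩
  set m := σ.symm ⟨x, hx⟩ with hm
  have hxm : x = (σ m : ℕ) := by simp [hm]
  rw [h1, reflIn_coe] at hr
  rw [h2, reflIn_coe] at hl
  have l1 : k.rev < m := by rw [← σ.lt_iff_lt]; exact_mod_cast (hxm ▸ hl)
  have l2 : m < j.rev := by rw [← σ.lt_iff_lt]; exact_mod_cast (hxm ▸ hr)
  have := Fin.val_rev k
  have := Fin.val_rev j
  have := k.isLt
  rw [Fin.lt_def] at l1 l2
  omega



def adjG (G : FinGraph) (u v : ℕ) : Prop := (u, v) ∈ G.E ∨ (v, u) ∈ G.E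

def linkedW (G : FinGraph) (W : Finset ℕ) (v : ℕ) : Prop := ∃ u ∈ W, u < v ∧ adjG G u v

noncomputable def startW (G : FinGraph) (W : Finset ℕ) (v : ℕ) : ℕ :=
  if h : (W.filter fun u => u ≤ v ∧ ¬ linkedW G W u).Nonempty
  then (W.filter fun u => u ≤ v ∧ ¬ linkedW G W u).max' h else v

noncomputable def compW (G : FinGraph) (W : Finset ℕ) (v : ℕ) : Finset ℕ :=
  W.filter fun w => startW G W w = startW G W v

variable {G : FinGraph} {W : Finset ℕ}

lemma startW_cand_nonempty {v : ℕ} (hv : v ∈ W) :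
    (W.filter fun u => u ≤ v ∧ ¬ linkedW G W u).Nonempty := by
  refine ⟨W.min' ⟨v, hv⟩, Finset.mem_filter.2 ⟨W.min'_mem _, W.min'_le _ hv, ?_⟩⟩
  rintro ⟨u, hu, hlt, -⟩
  exact absurd (W.min'_le _ hu) (not_le.2 hlt)

lemma startW_spec {v : ℕ} (hv : v ∈ W) :
    startW G W v ∈ W ∧ startW G W v ≤ v ∧ ¬ linkedW G W (startW G W v) := by
  have h := startW_cand_nonempty (G := G) hv
  rw [startW, dif_pos h]
  have := Finset.max'_mem _ h
  rw [Finset.mem_filter] at this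
  exact ⟨this.1, this.2.1, this.2.2⟩

lemma startW_mem {v : ℕ} (hv : v ∈ W) : startW G W v ∈ W := (startW_spec hv).1
lemma startW_le {v : ℕ} (hv : v ∈ W) : startW G W v ≤ v := (startW_spec hv).2.1
lemma startW_not_linked {v : ℕ} (hv : v ∈ W) : ¬ linkedW G W (startW G W v) :=
  (startW_spec hv).2.2

lemma le_startW {v u : ℕ} (hv : v ∈ W) (hu : u ∈ W) (huv : u ≤ v)
    (hnl : ¬ linkedW G W u) : u ≤ startW G W v := by
  have h := startW_cand_nonempty (G := G) hv
  rw [startW, dif_pos h]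
  exact Finset.le_max' _ u (Finset.mem_filter.2 ⟨hu, huv, hnl⟩)

lemma startW_self {v : ℕ} (hv : v ∈ W) (hnl : ¬ linkedW G W v) : startW G W v = v :=
  le_antisymm (startW_le hv) (le_startW hv hv le_rfl hnl)

/-- Key structural hypothesis: in W, adjacency only between W-consecutive vertices. -/
def NoSkip (G : FinGraph) (W : Finset ℕ) : Prop :=
  ∀ u x w, u ∈ W → x ∈ W → w ∈ W → u < x → x < w → ¬ adjG G u w

lemma startW_eq_of_adj (HW : NoSkip G W) {a b : ℕ} (ha : a ∈ W) (hb : b ∈ W)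
    (hab : a < b) (hadj : adjG G a b) : startW G W a = startW G W b := by
  have hlinked : linkedW G W b := ⟨a, ha, hab, hadj⟩
  have h1 : startW G W a ≤ startW G W b :=
    le_startW hb (startW_mem ha) (le_trans (startW_le ha) hab.le) (startW_not_linked ha)
  have h2 : startW G W b ≤ startW G W a := by
    have hsb : startW G W b ≠ b := fun h => (startW_not_linked hb) (h ▸ hlinked)
    have hsblt : startW G W b < b := lt_of_le_of_ne (startW_le hb) hsb
    have hle : startW G W b ≤ a := by
      by_contra hgt
      exact HW a (startW G W b) b ha (startW_mem hb) hb (not_le.1 hgt) hsblt hadj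
    exact le_startW ha (startW_mem hb) hle (startW_not_linked hb)
  exact le_antisymm h1 h2

lemma compW_congr {a b : ℕ} (h : startW G W a = startW G W b) :
    compW G W a = compW G W b := by simp only [compW, h]

lemma mem_compW_self {v : ℕ} (hv : v ∈ W) : v ∈ compW G W v :=
  Finset.mem_filter.2 ⟨hv, rfl⟩

lemma compW_subset (v : ℕ) : compW G W v ⊆ W := Finset.filter_subset _ _

lemma startW_eq_of_mem_compW {v w : ℕ} (h : w ∈ compW G W v) :
    startW G W w = startW G W v := (Finset.mem_filter.1 h).2

lemma consec_adj (HW : NoSkip G W) {v p q : ℕ} (hp : p ∈ compW G W v) (hq : q ∈ compW G W v)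
    (hpq : p < q) (hb : ∀ x ∈ compW G W v, ¬(p < x ∧ x < q)) : adjG G p q := by
  have hpW : p ∈ W := compW_subset v hp
  have hqW : q ∈ W := compW_subset v hq
  have hql : linkedW G W q := by
    by_contra hnl
    have : startW G W q = q := startW_self hqW hnl
    have h1 : startW G W q = startW G W p :=
      (startW_eq_of_mem_compW hq).trans (startW_eq_of_mem_compW hp).symm
    have := startW_le (G := G) hpW
    omega
  obtain ⟨u, hu, hub, hadj⟩ := hql
  have hustart : startW G W u = startW G W q := startW_eq_of_adj HW hu hqW hub hadj
  have huc : u ∈ compW G W v :=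
    Finset.mem_filter.2 ⟨hu, hustart.trans (startW_eq_of_mem_compW hq)⟩
  have : u = p := by
    rcases lt_trichotomy u p with h | h | h
    · exact absurd hadj (HW u p q hu hpW hqW h hpq)
    · exact h
    · exact absurd ⟨h, hub⟩ (hb u huc)
  exact this ▸ hadj

noncomputable def reflW (G : FinGraph) (W : Finset ℕ) (v : ℕ) : ℕ := reflIn (compW G W v) v

variable {G : FinGraph} {W : Finset ℕ}

lemma reflW_mem_comp {v : ℕ} (hv : v ∈ W) : reflW G W v ∈ compW G W v :=
  reflIn_mem (mem_compW_self hv)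

lemma reflW_mem {v : ℕ} (hv : v ∈ W) : reflW G W v ∈ W := compW_subset v (reflW_mem_comp hv)

lemma compW_reflW {v : ℕ} (hv : v ∈ W) : compW G W (reflW G W v) = compW G W v :=
  compW_congr (startW_eq_of_mem_compW (reflW_mem_comp hv))

lemma reflW_invol {v : ℕ} (hv : v ∈ W) : reflW G W (reflW G W v) = v := by
  have h := compW_reflW (G := G) hv
  simp only [reflW] at h ⊢
  rw [h]
  exact reflIn_invol (mem_compW_self hv)

/-- The central edge-reflection lemma. -/
lemma reflW_edge (HW : NoSkip G W) {a b : ℕ} (ha : a ∈ W) (hb : b ∈ W) (hab : a < b)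
    (hadj : adjG G a b) :
    reflW G W b < reflW G W a ∧ adjG G (reflW G W b) (reflW G W a) := by
  have hstart : startW G W a = startW G W b := startW_eq_of_adj HW ha hb hab hadj
  have hcomp : compW G W b = compW G W a := compW_congr hstart.symm
  have haC : a ∈ compW G W a := mem_compW_self ha
  have hbC : b ∈ compW G W a := hcomp ▸ mem_compW_self hb
  have hbet : ∀ x ∈ compW G W a, ¬(a < x ∧ x < b) := by
    rintro x hx ⟨h1, h2⟩
    exact HW a x b ha (compW_subset a hx) hb h1 h2 hadj
  have hrb : reflW G W b = reflIn (compW G W a) b := by rw [reflW, hcomp]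
  have hlt : reflIn (compW G W a) b < reflIn (compW G W a) a := reflIn_lt haC hbC hab
  have hbet' := reflIn_between haC hbC hab hbet
  have hpC : reflIn (compW G W a) b ∈ compW G W a := reflIn_mem hbC
  have hqC : reflIn (compW G W a) a ∈ compW G W a := reflIn_mem haC
  have hra : reflW G W a = reflIn (compW G W a) a := rfl
  refine ⟨by rw [hrb, hra]; exact hlt, ?_⟩
  rw [hrb, hra]
  exact consec_adj HW hpC hqC hlt hbet'

section Swap
variable {i : ℕ}

lemma swap_pair {c : ℕ} (h : c = i ∨ c = i + 1) :
    Equiv.swap i (i + 1) c = i ∨ Equiv.swap i (i + 1) c = i + 1 := by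
  rcases h with h | h <;> subst h <;> simp [Equiv.swap_apply_left, Equiv.swap_apply_right]

lemma swap_fix {c : ℕ} (h : ¬(c = i ∨ c = i + 1)) : Equiv.swap i (i + 1) c = c := by
  push_neg at h
  exact Equiv.swap_apply_of_ne_of_ne h.1 h.2

lemma swap_lt_iff {c c' : ℕ} (hc : c = i ∨ c = i + 1) (hc' : c' = i ∨ c' = i + 1) :
    Equiv.swap i (i + 1) c < Equiv.swap i (i + 1) c' ↔ c' < c := by
  rcases hc with h | h <;> rcases hc' with h' | h' <;> subst h <;> subst h' <;>
    simp [Equiv.swap_apply_left, Equiv.swap_apply_right]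

lemma pair_lt_iff {c c' d : ℕ} (hc : c = i ∨ c = i + 1) (hc' : c' = i ∨ c' = i + 1)
    (hd : ¬(d = i ∨ d = i + 1)) : (c < d ↔ c' < d) ∧ (d < c ↔ d < c') := by omega

end Swap

def Wof (G : FinGraph) (i : ℕ) (κ : ℕ → ℕ) : Finset ℕ :=
  G.V.filter fun v => κ v = i ∨ κ v = i + 1

noncomputable def Flip (G : FinGraph) (i : ℕ) (κ : ℕ → ℕ) : ℕ → ℕ := fun v =>
  if v ∈ Wof G i κ then Equiv.swap i (i + 1) (κ (reflW G (Wof G i κ) v)) else κ v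

section Main

variable {G : FinGraph} {ltP : ℕ → ℕ → Prop}
    (hmem : ∀ x y, ltP x y → x ∈ G.V ∧ y ∈ G.V)
    (htrans : ∀ x y z, ltP x y → ltP y z → ltP x z)
    (hnat : ∀ x y, ltP x y → x < y)
    (hnuio : ∀ x y z, x ∈ G.V → y ∈ G.V → z ∈ G.V → y ≠ x → y ≠ z → ltP x z →
      ¬ ltP x y → ¬ ltP y x → ¬ ltP y z → ¬ ltP z y → x < y ∧ y < z)
    (hinc : ∀ p : ℕ × ℕ, p ∈ G.E ↔
      (p.1 ∈ G.V ∧ p.2 ∈ G.V ∧ p.1 < p.2 ∧ ¬ ltP p.1 p.2 ∧ ¬ ltP p.2 p.1))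

include hnat hinc in
lemma ltP_of_not_adj {u v : ℕ} (hu : u ∈ G.V) (hv : v ∈ G.V) (huv : u < v)
    (hna : ¬ adjG G u v) : ltP u v := by
  have h1 : (u, v) ∉ G.E := fun h => hna (Or.inl h)
  rw [hinc (u, v)] at h1
  push_neg at h1
  rcases Classical.em (ltP u v) with h | h
  · exact h
  · exact absurd (hnat _ _ (h1 hu hv huv h)) (by omega)

include hinc in
lemma incomp_of_edge {u v : ℕ} (h : (u, v) ∈ G.E) : ¬ ltP u v ∧ ¬ ltP v u := by
  have := (hinc (u, v)).1 h
  exact ⟨this.2.2.2.1, this.2.2.2.2⟩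

variable {κ : ℕ → ℕ} (hκ : IsProperColoring G κ)

include hκ in
lemma ne_color_of_adj {u v : ℕ} (h : adjG G u v) : κ u ≠ κ v := by
  rcases h with h | h
  · exact hκ.2.2 _ h
  · exact (hκ.2.2 _ h).symm

lemma mem_Wof {i v : ℕ} : v ∈ Wof G i κ ↔ v ∈ G.V ∧ (κ v = i ∨ κ v = i + 1) :=
  Finset.mem_filter

include htrans hnat hnuio hinc hκ in
lemma noSkip_Wof (i : ℕ) : NoSkip G (Wof G i κ) := by
  intro u x w hu hx hw hux hxw hadj
  rw [mem_Wof] at hu hx hw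
  have hedge : (u, w) ∈ G.E := by
    rcases hadj with h | h
    · exact h
    · exact absurd (G.fst_lt_snd _ h) (by omega)
  have hcol_uw : κ u ≠ κ w := ne_color_of_adj hκ (Or.inl hedge)
  have hincuw := incomp_of_edge hinc hedge
  have hcase : κ x = κ u ∨ κ x = κ w := by omega
  rcases hcase with hcx | hcx
  · have hnux : ¬ adjG G u x := fun h => ne_color_of_adj hκ h hcx.symm
    have hux' : ltP u x := ltP_of_not_adj hnat hinc hu.1 hx.1 hux hnux
    by_cases hxwadj : adjG G x w
    · have hexw : (x, w) ∈ G.E := by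
        rcases hxwadj with h | h
        · exact h
        · exact absurd (G.fst_lt_snd _ h) (by omega)
      have hincxw := incomp_of_edge hinc hexw
      have := hnuio u w x hu.1 hw.1 hx.1 (by omega) (by omega) hux'
        hincuw.1 hincuw.2 hincxw.2 hincxw.1
      omega
    · exact hincuw.1 (htrans u x w hux' (ltP_of_not_adj hnat hinc hx.1 hw.1 hxw hxwadj))
  · have hnxw : ¬ adjG G x w := fun h => ne_color_of_adj hκ h hcx
    have hxw' : ltP x w := ltP_of_not_adj hnat hinc hx.1 hw.1 hxw hnxw
    by_cases huxadj : adjG G u x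
    · have heux : (u, x) ∈ G.E := by
        rcases huxadj with h | h
        · exact h
        · exact absurd (G.fst_lt_snd _ h) (by omega)
      have hincux := incomp_of_edge hinc heux
      have := hnuio x u w hx.1 hu.1 hw.1 (by omega) (by omega) hxw'
        hincux.2 hincux.1 hincuw.1 hincuw.2
      omega
    · exact hincuw.1 (htrans u x w (ltP_of_not_adj hnat hinc hu.1 hx.1 hux huxadj) hxw')

end Main


section Main2

variable {G : FinGraph} {ltP : ℕ → ℕ → Prop}
    (hmem : ∀ x y, ltP x y → x ∈ G.V ∧ y ∈ G.V)
    (htrans : ∀ x y z, ltP x y → ltP y z → ltP x z)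
    (hnat : ∀ x y, ltP x y → x < y)
    (hnuio : ∀ x y z, x ∈ G.V → y ∈ G.V → z ∈ G.V → y ≠ x → y ≠ z → ltP x z →
      ¬ ltP x y → ¬ ltP y x → ¬ ltP y z → ¬ ltP z y → x < y ∧ y < z)
    (hinc : ∀ p : ℕ × ℕ, p ∈ G.E ↔
      (p.1 ∈ G.V ∧ p.2 ∈ G.V ∧ p.1 < p.2 ∧ ¬ ltP p.1 p.2 ∧ ¬ ltP p.2 p.1))
    {κ : ℕ → ℕ} {i : ℕ}

lemma color_reflW (hv : v ∈ Wof G i κ) :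
    κ (reflW G (Wof G i κ) v) = i ∨ κ (reflW G (Wof G i κ) v) = i + 1 :=
  (mem_Wof.1 (reflW_mem hv)).2

lemma flip_mem_pair (hv : v ∈ Wof G i κ) :
    Flip G i κ v = i ∨ Flip G i κ v = i + 1 := by
  rw [Flip, if_pos hv]
  exact swap_pair (color_reflW hv)

lemma Wof_flip : Wof G i (Flip G i κ) = Wof G i κ := by
  ext v
  rw [mem_Wof, mem_Wof]
  constructor
  · rintro ⟨hV, hpair⟩
    refine ⟨hV, ?_⟩
    by_cases hv : v ∈ Wof G i κ
    · exact (mem_Wof.1 hv).2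
    · rwa [Flip, if_neg hv] at hpair
  · rintro ⟨hV, hpair⟩
    exact ⟨hV, flip_mem_pair (mem_Wof.2 ⟨hV, hpair⟩)⟩

lemma Flip_pos (hv : v ∈ Wof G i κ) :
    Flip G i κ v = Equiv.swap i (i + 1) (κ (reflW G (Wof G i κ) v)) := if_pos hv

lemma Flip_neg (hv : v ∉ Wof G i κ) : Flip G i κ v = κ v := if_neg hv

lemma Flip_flip : Flip G i (Flip G i κ) = κ := by
  funext v
  by_cases hv : v ∈ Wof G i κ
  · have h1 : v ∈ Wof G i (Flip G i κ) := by rw [Wof_flip]; exact hv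
    have hr : reflW G (Wof G i κ) v ∈ Wof G i κ := reflW_mem hv
    rw [Flip_pos h1, Wof_flip, Flip_pos hr, reflW_invol hv, Equiv.swap_apply_self]
  · have h1 : v ∉ Wof G i (Flip G i κ) := by rw [Wof_flip]; exact hv
    rw [Flip_neg h1, Flip_neg hv]

variable (hκ : IsProperColoring G κ)

include htrans hnat hnuio hinc hκ in
lemma flip_proper (hi : i ≠ 0) : IsProperColoring G (Flip G i κ) := by
  have HW := noSkip_Wof htrans hnat hnuio hinc hκ i
  refine ⟨?_, ?_, ?_⟩
  · intro v hv
    by_cases hw : v ∈ Wof G i κ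
    · have := flip_mem_pair (κ := κ) hw
      omega
    · rw [Flip, if_neg hw]; exact hκ.1 v hv
  · intro v hv
    have hw : v ∉ Wof G i κ := fun h => hv (mem_Wof.1 h).1
    rw [Flip, if_neg hw]; exact hκ.2.1 v hv
  · intro e he
    have ha : e.1 ∈ G.V := G.mem_fst e he
    have hb : e.2 ∈ G.V := G.mem_snd e he
    have hab : e.1 < e.2 := G.fst_lt_snd e he
    have hadj : adjG G e.1 e.2 := Or.inl (by simpa using he)
    by_cases h1 : e.1 ∈ Wof G i κ <;> by_cases h2 : e.2 ∈ Wof G i κ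
    · obtain ⟨hlt, hadj'⟩ := reflW_edge HW h1 h2 hab hadj
      rw [Flip_pos h1, Flip_pos h2]
      intro h
      exact ne_color_of_adj hκ hadj' ((Equiv.injective _ h) ▸ rfl)
    · have hp := flip_mem_pair (κ := κ) h1
      have hq : ¬(κ e.2 = i ∨ κ e.2 = i + 1) := fun h => h2 (mem_Wof.2 ⟨hb, h⟩)
      rw [Flip_neg h2]
      omega
    · have hp := flip_mem_pair (κ := κ) h2
      have hq : ¬(κ e.1 = i ∨ κ e.1 = i + 1) := fun h => h1 (mem_Wof.2 ⟨ha, h⟩)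
      rw [Flip_neg h1]
      omega
    · rw [Flip_neg h1, Flip_neg h2]
      exact hκ.2.2 e he

include htrans hnat hnuio hinc hκ in
lemma flip_asc : ascNum G (Flip G i κ) = ascNum G κ := by
  have HW := noSkip_Wof htrans hnat hnuio hinc hκ i
  set W := Wof G i κ with hWdef
  set Ψ : ℕ × ℕ → ℕ × ℕ :=
    fun e => if e.1 ∈ W ∧ e.2 ∈ W then (reflW G W e.2, reflW G W e.1) else e with hΨdef
  have hedge : ∀ e ∈ G.E, e.1 ∈ W → e.2 ∈ W →
      reflW G W e.2 < reflW G W e.1 ∧ adjG G (reflW G W e.2) (reflW G W e.1) :=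
    fun e he h1 h2 => reflW_edge HW h1 h2 (G.fst_lt_snd e he) (Or.inl (by simpa using he))
  have hΨE : ∀ e ∈ G.E, Ψ e ∈ G.E := by
    intro e he
    by_cases hc : e.1 ∈ W ∧ e.2 ∈ W
    · obtain ⟨hlt, hadj⟩ := hedge e he hc.1 hc.2
      rw [hΨdef]
      simp only [if_pos hc]
      rcases hadj with h | h
      · exact h
      · exact absurd (G.fst_lt_snd _ h) (by omega)
    · rw [hΨdef]; simpa only [if_neg hc] using he
  have hΨΨ : ∀ e ∈ G.E, Ψ (Ψ e) = e := by
    intro e he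
    by_cases hc : e.1 ∈ W ∧ e.2 ∈ W
    · have hr1 : reflW G W e.2 ∈ W := reflW_mem hc.2
      have hr2 : reflW G W e.1 ∈ W := reflW_mem hc.1
      rw [hΨdef]
      simp only [if_pos hc]
      simp only [if_pos (And.intro hr1 hr2)]
      rw [reflW_invol hc.1, reflW_invol hc.2]
    · rw [hΨdef]; simp only [if_neg hc]
  have hasc : ∀ e ∈ G.E, (Flip G i κ e.1 < Flip G i κ e.2 ↔ κ (Ψ e).1 < κ (Ψ e).2) := by
    intro e he
    have haV : e.1 ∈ G.V := G.mem_fst e he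
    have hbV : e.2 ∈ G.V := G.mem_snd e he
    by_cases h1 : e.1 ∈ W <;> by_cases h2 : e.2 ∈ W
    · have hc : e.1 ∈ W ∧ e.2 ∈ W := ⟨h1, h2⟩
      rw [hΨdef]
      simp only [if_pos hc]
      rw [Flip_pos h1, Flip_pos h2]
      exact swap_lt_iff (color_reflW h1) (color_reflW h2)
    · have hc : ¬(e.1 ∈ W ∧ e.2 ∈ W) := fun h => h2 h.2
      rw [hΨdef]; simp only [if_neg hc]
      rw [Flip_pos h1, Flip_neg h2]
      have hca : κ e.1 = i ∨ κ e.1 = i + 1 := (mem_Wof.1 h1).2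
      have hcr := color_reflW (κ := κ) h1
      have hcb : ¬(κ e.2 = i ∨ κ e.2 = i + 1) := fun h => h2 (mem_Wof.2 ⟨hbV, h⟩)
      have hsp := swap_pair (i := i) hcr
      omega
    · have hc : ¬(e.1 ∈ W ∧ e.2 ∈ W) := fun h => h1 h.1
      rw [hΨdef]; simp only [if_neg hc]
      rw [Flip_neg h1, Flip_pos h2]
      have hca : κ e.2 = i ∨ κ e.2 = i + 1 := (mem_Wof.1 h2).2
      have hcr := color_reflW (κ := κ) h2
      have hcb : ¬(κ e.1 = i ∨ κ e.1 = i + 1) := fun h => h1 (mem_Wof.2 ⟨haV, h⟩)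
      have hsp := swap_pair (i := i) hcr
      omega
    · have hc : ¬(e.1 ∈ W ∧ e.2 ∈ W) := fun h => h1 h.1
      rw [hΨdef]; simp only [if_neg hc]
      rw [Flip_neg h1, Flip_neg h2]
  rw [ascNum, ascNum]
  refine Finset.card_nbij' Ψ Ψ ?_ ?_ ?_ ?_
  · intro e hme
    rw [Finset.mem_coe, Finset.mem_filter] at hme ⊢
    exact ⟨hΨE e hme.1, (hasc e hme.1).1 hme.2⟩
  · intro e hme
    rw [Finset.mem_coe, Finset.mem_filter] at hme ⊢
    refine ⟨hΨE e hme.1, ?_⟩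
    have := hasc (Ψ e) (hΨE e hme.1)
    rw [hΨΨ e hme.1] at this
    exact this.2 hme.2
  · intro e hme; exact hΨΨ e (Finset.mem_filter.1 hme).1
  · intro e hme; exact hΨΨ e (Finset.mem_filter.1 hme).1

lemma flip_xmonom :
    xmonom G (Flip G i κ) = Finsupp.equivMapDomain (Equiv.swap i (i + 1)) (xmonom G κ) := by
  rw [xmonom, xmonom, Finsupp.equivMapDomain_eq_mapDomain, Finsupp.mapDomain_finset_sum]
  simp only [Finsupp.mapDomain_single]
  rw [← Finset.sum_filter_add_sum_filter_not G.V (fun v => v ∈ Wof G i κ)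
    (fun v => Finsupp.single (Flip G i κ v) 1),
    ← Finset.sum_filter_add_sum_filter_not G.V (fun v => v ∈ Wof G i κ)
    (fun v => Finsupp.single (Equiv.swap i (i + 1) (κ v)) 1)]
  have hWf : G.V.filter (fun v => v ∈ Wof G i κ) = Wof G i κ := by
    ext v
    simp only [Finset.mem_filter, mem_Wof]
    tauto
  congr 1
  · rw [hWf]
    refine Finset.sum_nbij' (reflW G (Wof G i κ)) (reflW G (Wof G i κ))
      (fun v hv => reflW_mem hv) (fun v hv => reflW_mem hv)
      (fun v hv => reflW_invol hv) (fun v hv => reflW_invol hv) ?_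
    intro v hv
    rw [Flip_pos hv]
  · refine Finset.sum_congr rfl ?_
    intro v hv
    rw [Finset.mem_filter] at hv
    have h1 : ¬(κ v = i ∨ κ v = i + 1) := fun h => hv.2 (mem_Wof.2 ⟨hv.1, h⟩)
    rw [Flip_neg hv.2, swap_fix h1]

include htrans hnat hnuio hinc in
lemma coeff_swap_eq (i : ℕ) (hi : i ≠ 0) (d : ℕ →₀ ℕ) :
    MvPowerSeries.coeff (Finsupp.equivMapDomain (Equiv.swap i (i + 1)) d) (XG G) =
      MvPowerSeries.coeff d (XG G) := by
  rw [MvPowerSeries.coeff_apply, MvPowerSeries.coeff_apply]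
  rw [XG, XG]
  refine (finsum_mem_eq_of_bijOn (Flip G i) ?_ ?_).symm
  · constructor
    · rintro κ' ⟨hp, hx⟩
      exact ⟨flip_proper htrans hnat hnuio hinc hp hi,
        by rw [flip_xmonom, hx]⟩
    constructor
    · rintro κ₁ ⟨hp₁, -⟩ κ₂ ⟨hp₂, -⟩ heq
      have := congrArg (Flip G i) heq
      rwa [Flip_flip, Flip_flip] at this
    · rintro κ' ⟨hp, hx⟩
      refine ⟨Flip G i κ', ⟨flip_proper htrans hnat hnuio hinc hp hi, ?_⟩, Flip_flip⟩
      rw [flip_xmonom, hx, ← Finsupp.equivMapDomain_trans, Equiv.swap_swap,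
        Finsupp.equivMapDomain_refl]
  · rintro κ' ⟨hp, -⟩
    rw [flip_asc htrans hnat hnuio hinc hp]

end Main2

/-- If `G` is the incomparability graph of a natural unit interval order, then each
coefficient of `t^j` in `X_G(x,t)` is a symmetric function: it is invariant under all
permutations of the variables `x_1, x_2, …`. -/
theorem chromatic_symmetric_of_nuio (G : FinGraph) (ltP : ℕ → ℕ → Prop)
    (hmem : ∀ x y, ltP x y → x ∈ G.V ∧ y ∈ G.V)
    (htrans : ∀ x y z, ltP x y → ltP y z → ltP x z)
    (hnat : ∀ x y, ltP x y → x < y)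
    (hnuio : ∀ x y z, x ∈ G.V → y ∈ G.V → z ∈ G.V → y ≠ x → y ≠ z → ltP x z →
      ¬ ltP x y → ¬ ltP y x → ¬ ltP y z → ¬ ltP z y → x < y ∧ y < z)
    (hinc : ∀ p : ℕ × ℕ, p ∈ G.E ↔
      (p.1 ∈ G.V ∧ p.2 ∈ G.V ∧ p.1 < p.2 ∧ ¬ ltP p.1 p.2 ∧ ¬ ltP p.2 p.1)) :
    ∀ π : Equiv.Perm ℕ, π 0 = 0 → ∀ d : ℕ →₀ ℕ,
      MvPowerSeries.coeff (Finsupp.equivMapDomain π d) (XG G) =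
        MvPowerSeries.coeff d (XG G) := by
  
  classical
  have Cp_trans : ∀ σ τ : Equiv.Perm ℕ,
      (∀ d : ℕ →₀ ℕ, MvPowerSeries.coeff (Finsupp.equivMapDomain σ d) (XG G) =
        MvPowerSeries.coeff d (XG G)) →
      (∀ d : ℕ →₀ ℕ, MvPowerSeries.coeff (Finsupp.equivMapDomain τ d) (XG G) =
        MvPowerSeries.coeff d (XG G)) →
      ∀ d : ℕ →₀ ℕ, MvPowerSeries.coeff
          (Finsupp.equivMapDomain (σ.trans τ) d) (XG G) =
        MvPowerSeries.coeff d (XG G) := by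
    intro σ τ hσ hτ d
    rw [Finsupp.equivMapDomain_trans]
    exact (hτ _).trans (hσ d)
  have key : ∀ i : ℕ, i ≠ 0 →
      ∀ d : ℕ →₀ ℕ, MvPowerSeries.coeff
          (Finsupp.equivMapDomain (Equiv.swap i (i + 1)) d) (XG G) =
        MvPowerSeries.coeff d (XG G) :=
    fun i hi => coeff_swap_eq htrans hnat hnuio hinc i hi
  have Cp_swap_gen : ∀ k a : ℕ, a ≠ 0 →
      ∀ d : ℕ →₀ ℕ, MvPowerSeries.coeff
          (Finsupp.equivMapDomain (Equiv.swap a (a + k + 1)) d) (XG G) =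
        MvPowerSeries.coeff d (XG G) := by
    intro k
    induction k with
    | zero => intro a ha; exact key a ha
    | succ k IH =>
      intro a ha
      have hid : Equiv.swap a (a + (k + 1) + 1) =
          ((Equiv.swap (a + k + 1) (a + k + 2)).trans (Equiv.swap a (a + k + 1))).trans
            (Equiv.swap (a + k + 1) (a + k + 2)) := by
        ext x
        simp only [Equiv.trans_apply, Equiv.swap_apply_def]
        split_ifs <;> omega
      rw [hid]
      exact Cp_trans _ _ (Cp_trans _ _ (key (a + k + 1) (by omega)) (IH a ha))
        (key (a + k + 1) (by omega))
  have Cp_swap : ∀ a b : ℕ, a ≠ 0 → b ≠ 0 → a ≠ b →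
      ∀ d : ℕ →₀ ℕ, MvPowerSeries.coeff
          (Finsupp.equivMapDomain (Equiv.swap a b) d) (XG G) =
        MvPowerSeries.coeff d (XG G) := by
    intro a b ha hb hne
    rcases lt_or_gt_of_ne hne with h | h
    · have hb' : b = a + (b - a - 1) + 1 := by omega
      rw [hb']
      exact Cp_swap_gen _ a ha
    · have ha' : a = b + (a - b - 1) + 1 := by omega
      rw [Equiv.swap_comm, ha']
      exact Cp_swap_gen _ b hb
  intro π hπ0 d
  have hexists : ∀ s : Finset ℕ, ∃ σ : Equiv.Perm ℕ,
      (∀ d : ℕ →₀ ℕ, MvPowerSeries.coeff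
          (Finsupp.equivMapDomain σ d) (XG G) =
        MvPowerSeries.coeff d (XG G)) ∧ σ 0 = 0 ∧ ∀ x ∈ s, σ x = π x := by
    intro s
    induction s using Finset.induction_on with
    | empty =>
      exact ⟨Equiv.refl ℕ, fun d => by rw [Finsupp.equivMapDomain_refl], rfl, by simp⟩
    | @insert a s ha IH =>
      obtain ⟨σ, hc, h0, hag⟩ := IH
      by_cases heq : σ a = π a
      · refine ⟨σ, hc, h0, ?_⟩
        intro x hx
        rcases Finset.mem_insert.1 hx with rfl | hx
        · exact heq
        · exact hag x hx
      · have ha0 : a ≠ 0 := by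
          rintro rfl
          exact heq (h0.trans hπ0.symm)
        have hσa : σ a ≠ 0 := fun h => ha0 (σ.injective (h.trans h0.symm))
        have hπa : π a ≠ 0 := fun h => ha0 (π.injective (h.trans hπ0.symm))
        refine ⟨σ.trans (Equiv.swap (σ a) (π a)),
          Cp_trans _ _ hc (Cp_swap _ _ hσa hπa heq), ?_, ?_⟩
        · rw [Equiv.trans_apply, h0]
          exact Equiv.swap_apply_of_ne_of_ne (Ne.symm hσa) (Ne.symm hπa)
        · intro x hx
          rcases Finset.mem_insert.1 hx with rfl | hx
          · rw [Equiv.trans_apply, Equiv.swap_apply_left]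
          · have hx' := hag x hx
            have hxa : x ≠ a := fun h => ha (h ▸ hx)
            rw [Equiv.trans_apply, hx']
            refine Equiv.swap_apply_of_ne_of_ne ?_ ?_
            · intro h
              exact hxa (σ.injective (hx'.trans h).symm).symm
            · intro h
              exact hxa (π.injective h)
        
  obtain ⟨σ, hc, h0, hag⟩ := hexists d.support
  have hd : Finsupp.equivMapDomain π d = Finsupp.equivMapDomain σ d := by
    rw [Finsupp.equivMapDomain_eq_mapDomain, Finsupp.equivMapDomain_eq_mapDomain]
    exact Finsupp.mapDomain_congr fun x hx => (hag x hx).symm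
  rw [hd]
  exact hc d
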